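/- Let $n, k, j$ be non-negative integers satisfying $2k \leq n$ and $j < k$. Then $\sum_{i=1}^{k-j} (-1)^{i-1}\,\binom{n-2k+i}{i-1}\,\binom{n-2j+1}{k-i-j} = \binom{2k-2j-1}{k-j}$, where the sum is computed in the integers. -/

import Mathlib

open PowerSeries

private lemma coeff_one_add_X_pow' (c t : ℕ) :
    (PowerSeries.coeff t) ((1 + X : ℤ⟦X⟧) ^ c) = (Nat.choose c t : ℤ) := by
  have h : ((1 + Polynomial.X : Polynomial ℤ) : ℤ⟦X⟧) = 1 + X := by
    simp [Polynomial.coe_add, Polynomial.coe_one, Polynomial.coe_X]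
  rw [← h, ← Polynomial.coe_pow, Polynomial.coeff_coe, Polynomial.coeff_one_add_X_pow]

private lemma key (a b s : ℕ) (h : a + 1 ≤ b) :
    ∑ p ∈ Finset.HasAntidiagonal.antidiagonal s,
      ((-1 : ℤ) ^ p.1 * (Nat.choose (a + p.1) a) * (Nat.choose b p.2))
      = Nat.choose (b - (a + 1)) s := by
  set f : ℤ⟦X⟧ := PowerSeries.mk fun t => (-1 : ℤ) ^ t * (Nat.choose (a + t) a : ℤ) with hf
  have h1 : (1 + X : ℤ⟦X⟧) ^ (a + 1) * f = 1 := by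
    have h0 := mk_add_choose_mul_one_sub_pow_eq_one ℤ a
    have h2 := congrArg (rescale (-1 : ℤ)) h0
    rw [map_mul, map_pow, map_sub, map_one, rescale_neg_one_X, sub_neg_eq_add,
      rescale_mk] at h2
    rw [mul_comm]
    exact h2
  have h2 : f * (1 + X : ℤ⟦X⟧) ^ b = (1 + X) ^ (b - (a + 1)) := by
    conv_lhs => rw [show b = (a + 1) + (b - (a + 1)) by omega]
    rw [pow_add, ← mul_assoc, mul_comm f, h1, one_mul]
  have h3 := congrArg (PowerSeries.coeff s) h2
  rw [PowerSeries.coeff_mul, coeff_one_add_X_pow'] at h3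
  rw [← h3]
  refine Finset.sum_congr rfl fun p _ => ?_
  rw [PowerSeries.coeff_mk, coeff_one_add_X_pow', mul_assoc]

theorem stmt_3 (n k j : ℕ) (h2k : 2 * k ≤ n) (hjk : j < k) :
    (∑ i ∈ Finset.Icc 1 (k - j),
      (-1 : ℤ) ^ (i - 1) * (Nat.choose (n - 2 * k + i) (i - 1)) *
        (Nat.choose (n - 2 * j + 1) (k - i - j)))
      = Nat.choose (2 * k - 2 * j - 1) (k - j) := by
  set N := n - 2 * k with hN
  set m := k - j with hm
  have hm1 : 1 ≤ m := by omega
  have key' := key (N + 1) (N + 2 * m + 1) (m - 1) (by omega)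
  rw [Finset.Nat.sum_antidiagonal_eq_sum_range_succ
    (fun x y => (-1 : ℤ) ^ x * (Nat.choose (N + 1 + x) (N + 1)) * (Nat.choose (N + 2 * m + 1) y))
    (m - 1)] at key'
  have hrange : (m - 1).succ = m := by omega
  rw [hrange] at key'
  have hsub : N + 2 * m + 1 - (N + 1 + 1) = 2 * m - 1 := by omega
  rw [hsub] at key'
  rw [show Finset.Icc 1 m = Finset.Ico 1 (m + 1) by rw [Finset.Ico_add_one_right_eq_Icc],
    Finset.sum_Ico_eq_sum_range]
  have hub : m + 1 - 1 = m := by omega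
  rw [hub]
  have hgoal2 : (2 * k - 2 * j - 1 : ℕ) = 2 * m - 1 := by omega
  have hch : Nat.choose (2 * m - 1) m = Nat.choose (2 * m - 1) (m - 1) := by
    rw [← Nat.choose_symm (show m ≤ 2 * m - 1 by omega)]
    congr 1
    omega
  rw [hgoal2, hch, ← key']
  refine Finset.sum_congr rfl fun t ht => ?_
  simp only [Finset.mem_range] at ht
  have e1 : 1 + t - 1 = t := by omega
  have e2 : n - 2 * k + (1 + t) = N + 1 + t := by omega
  have e3 : n - 2 * j + 1 = N + 2 * m + 1 := by omega
  have e4 : k - (1 + t) - j = m - 1 - t := by omega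
  rw [e1, e2, e3, e4]
  rw [show (N + 1 + t).choose t = (N + 1 + t).choose (N + 1) by
    rw [← Nat.choose_symm (show t ≤ N + 1 + t by omega)]
    congr 1
    omega]
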